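/- Let R be a ring and S a subset of R satisfying: (i) if ab ∈ S then a ∈ S; (ii) S is a right Ore set; (iii) every element of S is regular; (iv) Q := R[S⁻¹] is directly finite; set K := Q/R. Let M be a torsion-free right R-module and λ : M → Hom_R(K, M ⊗_R K) the canonical map λ(x)(k) = x ⊗ k. Then: (a) ker λ is the closure of 0 in the R-topology of M, namely {x ∈ M | xR ⊆ Ms for every s ∈ S}; (b) ker λ is the kernel of the canonical map η : M → M̃ into the Hausdorff completion of M in the R-topology; (c) ker λ equals h(M), the largest h-divisible submodule of M. -/
import Mathlib


/-!
STATEMENT 3: Let R be a ring and S a subset of R satisfying: (i) if ab ∈ S then a ∈ S;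
(ii) S is a right Ore set; (iii) every element of S is regular; (iv) Q := R[S⁻¹] is
directly finite; set K := Q/R. Let M be a torsion-free right R-module and
λ : M → Hom_R(K, M ⊗_R K) the canonical map λ(x)(k) = x ⊗ k. Then: (a) ker λ is the
closure of 0 in the R-topology of M, namely {x ∈ M | xR ⊆ Ms for every s ∈ S}; (b) ker λ
is the kernel of the canonical map η : M → M̃ into the Hausdorff completion of M in the
R-topology; (c) ker λ equals h(M), the largest h-divisible submodule of M.

Right `R`-modules are left `Rᵐᵒᵖ`-modules; the localization `Q`, the right `R`-module
`K := Q/R` with its left `R`-action `lmulK`, and the tensor product `T = M ⊗_R K`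
(axiomatized by its universal property) are as in the accompanying formalizations.  The
Hausdorff completion `M̃ = lim← M/U(s₁,…,sₙ)` is realized as the submodule of compatible
families in `∏_{F} M/U(F)`, where `F` runs over the finite subsets of `S` and
`U(F) = ⋂_{s ∈ F} U(s)` with `U(s) = {x | xR ⊆ Ms}`; `η` is the canonical map.  `h(M)` is
the supremum of all submodules `N` such that every element of `N` is the value at `1 ∈ Q`
of a homomorphism `Q → M` of right `R`-modules with range inside `N`.
-/

universe u
open MulOpposite

section Setting

variable (R Q : Type u) [Ring R] [Ring Q] (φ : R →+* Q) [Module Rᵐᵒᵖ Q]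
variable (hsmul : ∀ (q : Q) (r : R), op r • q = q * φ r)

/-- The image of `R` in `Q`, as a right `R`-submodule of `Q`. -/
def rsub : Submodule Rᵐᵒᵖ Q where
  carrier := Set.range φ
  zero_mem' := ⟨0, map_zero φ⟩
  add_mem' := by rintro _ _ ⟨a, rfl⟩ ⟨b, rfl⟩; exact ⟨a + b, map_add φ a b⟩
  smul_mem' := by
    rintro c _ ⟨a, rfl⟩
    refine ⟨a * c.unop, ?_⟩
    rw [map_mul, ← hsmul (φ a) c.unop, op_unop]

/-- `K := Q/R` as a right `R`-module. -/
abbrev kmod := Q ⧸ rsub R Q φ hsmul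

/-- Left multiplication by `φ r` on `Q`, as an endomorphism of the right `R`-module `Q`. -/
def lmulQ (r : R) : Q →ₗ[Rᵐᵒᵖ] Q where
  toFun q := φ r * q
  map_add' a b := mul_add _ a b
  map_smul' c q := by
    simp only [RingHom.id_apply]
    rw [← op_unop c, hsmul, hsmul, mul_assoc]

/-- The left action of `r ∈ R` on `K = Q/R`. -/
def lmulK (r : R) : kmod R Q φ hsmul →ₗ[Rᵐᵒᵖ] kmod R Q φ hsmul :=
  Submodule.mapQ _ _ (lmulQ R Q φ hsmul r) (by
    rintro _ ⟨a, rfl⟩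
    exact ⟨r * a, by simp [lmulQ, map_mul]⟩)

variable (M : Type u) [AddCommGroup M] [Module Rᵐᵒᵖ M]

/-- `U(s) = {x ∈ M | xR ⊆ Ms}`, a submodule of the right `R`-module `M`. -/
def usub (s : R) : Submodule Rᵐᵒᵖ M where
  carrier := {x | ∀ r : R, ∃ m : M, op r • x = op s • m}
  zero_mem' := fun r => ⟨0, by simp⟩
  add_mem' := by
    rintro x y hx hy r
    obtain ⟨m, hm⟩ := hx r
    obtain ⟨m', hm'⟩ := hy r
    exact ⟨m + m', by rw [smul_add, smul_add, hm, hm']⟩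
  smul_mem' := by
    rintro c x hx r
    obtain ⟨m, hm⟩ := hx (c.unop * r)
    refine ⟨m, ?_⟩
    have key : op r * c = op (c.unop * r) := by rw [op_mul, op_unop]
    rw [smul_smul, key]
    exact hm

variable (S : Submonoid R)

/-- `U(F) = ⋂_{s ∈ F} U(s)` for a finite subset `F` of `S`. -/
def ufin (F : Finset S) : Submodule Rᵐᵒᵖ M := ⨅ s ∈ F, usub R M (s : R)

lemma ufin_mono {F F' : Finset S} (h : F ⊆ F') : ufin R M S F' ≤ ufin R M S F :=
  le_iInf₂ fun s hs => iInf₂_le s (h hs)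

/-- The factor map `M/p → M/q` for `p ≤ q`. -/
def factorQ {p q : Submodule Rᵐᵒᵖ M} (h : p ≤ q) : (M ⧸ p) →ₗ[Rᵐᵒᵖ] (M ⧸ q) :=
  Submodule.mapQ p q LinearMap.id fun x hx => h hx

/-- The Hausdorff completion `M̃ = lim← M/U(s₁,…,sₙ)` of `M` in its `R`-topology, as the
submodule of compatible families in the product `∏_F M/U(F)`, `F` ranging over the finite
subsets of `S`. -/
def completionSub : Submodule Rᵐᵒᵖ (∀ F : Finset S, M ⧸ ufin R M S F) where
  carrier := {x | ∀ (F F' : Finset S) (h : F ⊆ F'),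
    factorQ R M (ufin_mono R M S h) (x F') = x F}
  zero_mem' := by intro F F' h; simp
  add_mem' := by
    intro x y hx hy F F' h
    simp only [Pi.add_apply, map_add, hx F F' h, hy F F' h]
  smul_mem' := by
    intro c x hx F F' h
    simp only [Pi.smul_apply, map_smul, hx F F' h]

/-- The canonical map `η : M → M̃`. -/
def etaFun : M → completionSub R M S := fun x =>
  ⟨fun _ => Submodule.Quotient.mk x, by
    intro F F' h
    simp [factorQ, Submodule.mapQ_apply]⟩

/-- `h(M)`: the largest h-divisible submodule of the right `R`-module `M`. -/
def hdivSub : Submodule Rᵐᵒᵖ M :=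
  sSup {N : Submodule Rᵐᵒᵖ M |
    ∀ y ∈ N, ∃ g : Q →ₗ[Rᵐᵒᵖ] M, LinearMap.range g ≤ N ∧ g 1 = y}

variable (T : Type u) [AddCommGroup T] [Module Rᵐᵒᵖ T]
variable (β : M → kmod R Q φ hsmul → T)
variable (hβ2 : ∀ x k k', β x (k + k') = β x k + β x k')
variable (hlin : ∀ (x : M) (r : R) (k : kmod R Q φ hsmul), β x (op r • k) = op r • β x k)

/-- The canonical map `λ : M → Hom_R(K, M ⊗_R K)`, `λ(x)(k) = x ⊗ k`. -/
def lam : M → (kmod R Q φ hsmul →ₗ[Rᵐᵒᵖ] T) := fun x =>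
  { toFun := β x
    map_add' := hβ2 x
    map_smul' := fun c k => by
      simp only [RingHom.id_apply]
      rw [← op_unop c]
      exact hlin x c.unop k }

end Setting

namespace Stmt3Aux
open OreLocalization


variable {R Q : Type u} [Ring R] [Ring Q] {S : Submonoid R} {φ : R →+* Q}

theorem opmem {s : R} (hs : s ∈ S) : op s ∈ S.op := Submonoid.mem_op.mpr hs

noncomputable def mkOreSet (hOre : ∀ (r : R), ∀ s ∈ S, ∃ (r' s' : R), s' ∈ S ∧ r * s' = s * r')
    (hreg : ∀ s ∈ S, IsRegular s) : OreSet S.op where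
  ore_right_cancel r₁ r₂ s h := ⟨1, by
    have h' : s.1.unop * r₁.unop = s.1.unop * r₂.unop := by
      have := congrArg unop h
      simpa using this
    have := ((hreg _ (Submonoid.mem_op.mp s.2)).left h')
    rw [unop_injective this]⟩
  oreNum r s := op (hOre r.unop s.1.unop (Submonoid.mem_op.mp s.2)).choose
  oreDenom r s := ⟨op (hOre r.unop s.1.unop (Submonoid.mem_op.mp s.2)).choose_spec.choose,
    Submonoid.mem_op.mpr (hOre r.unop s.1.unop
      (Submonoid.mem_op.mp s.2)).choose_spec.choose_spec.1⟩
  ore_eq r s := by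
    apply unop_injective
    simpa using (hOre r.unop s.1.unop (Submonoid.mem_op.mp s.2)).choose_spec.choose_spec.2

variable [OreSet S.op] {M : Type u} [AddCommGroup M] [Module Rᵐᵒᵖ M]

theorem frac_eq (hinj : Function.Injective φ)
    (hOre : ∀ (r : R), ∀ s ∈ S, ∃ (r' s' : R), s' ∈ S ∧ r * s' = s * r')
    (y : M) {q : Q} {r s r' s' : R} (hs : s ∈ S) (hs' : s' ∈ S)
    (h1 : q * φ s = φ r) (h2 : q * φ s' = φ r') :
    ((op r • y) /ₒ ⟨op s, opmem hs⟩ : OreLocalization S.op M)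
      = (op r' • y) /ₒ ⟨op s', opmem hs'⟩ := by
  obtain ⟨r₁, s₁, hs₁, hss⟩ := hOre s' s hs
  have hmem : s * r₁ ∈ S := hss ▸ S.mul_mem hs' hs₁
  have hnum : r * r₁ = r' * s₁ := by
    apply hinj
    calc φ (r * r₁) = q * φ (s * r₁) := by rw [map_mul, map_mul, ← mul_assoc, h1]
    _ = q * φ (s' * s₁) := by rw [hss]
    _ = φ (r' * s₁) := by rw [map_mul, ← mul_assoc, h2, ← map_mul]
  have e1 := OreLocalization.expand (op r • y) (⟨op s, opmem hs⟩ : S.op) (op r₁)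
    (by show op r₁ * op s ∈ S.op; rw [← op_mul]; exact opmem hmem)
  have e2 := OreLocalization.expand (op r' • y) (⟨op s', opmem hs'⟩ : S.op) (op s₁)
    (by show op s₁ * op s' ∈ S.op; rw [← op_mul]; exact opmem (hss ▸ hmem))
  rw [e1, e2]
  congr 1
  · rw [smul_smul, smul_smul, ← op_mul, ← op_mul, hnum]
  · ext; show op r₁ * op s = op s₁ * op s'; rw [← op_mul, ← op_mul, hss]


section NVal

variable (hinj : Function.Injective φ)
    (hOre : ∀ (r : R), ∀ s ∈ S, ∃ (r' s' : R), s' ∈ S ∧ r * s' = s * r')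
    (hfrac : ∀ q : Q, ∃ (r : R) (s : R), s ∈ S ∧ q * φ s = φ r)
include hinj hOre

noncomputable def nval (y : M) (q : Q) : OreLocalization S.op M :=
  (op (hfrac q).choose • y) /ₒ ⟨op (hfrac q).choose_spec.choose,
    opmem (hfrac q).choose_spec.choose_spec.1⟩

theorem nval_char (y : M) {q : Q} {r s : R} (hs : s ∈ S) (h : q * φ s = φ r) :
    nval hfrac y q = (op r • y) /ₒ ⟨op s, opmem hs⟩ :=
  frac_eq hinj hOre y (hfrac q).choose_spec.choose_spec.1 hs
    (hfrac q).choose_spec.choose_spec.2 h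

omit hinj hOre in
theorem nval_add_left (y y' : M) (q : Q) :
    nval hfrac (y + y') q = nval hfrac y q + nval hfrac y' q := by
  unfold nval
  rw [add_oreDiv, smul_add]

theorem nval_add_right (y : M) (q q' : Q) :
    nval hfrac y (q + q') = nval hfrac y q + nval hfrac y q' := by
  obtain ⟨r, s, hs, h⟩ := hfrac q
  obtain ⟨r', s', hs', h'⟩ := hfrac q'
  obtain ⟨r₁, s₁, hs₁, hss⟩ := hOre s' s hs
  have hmem : s * r₁ ∈ S := hss ▸ S.mul_mem hs' hs₁
  have hq : q * φ (s * r₁) = φ (r * r₁) := by rw [map_mul, map_mul, ← mul_assoc, h]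
  have hq' : q' * φ (s * r₁) = φ (r' * s₁) := by
    rw [← hss, map_mul, map_mul, ← mul_assoc, h']
  have hsum : (q + q') * φ (s * r₁) = φ (r * r₁ + r' * s₁) := by
    rw [add_mul, hq, hq', map_add]
  rw [nval_char hinj hOre hfrac y hmem hsum, nval_char hinj hOre hfrac y hmem hq,
    nval_char hinj hOre hfrac y hmem hq', add_oreDiv, op_add, add_smul]

theorem nval_bal (y : M) (r : R) (q : Q) :
    nval hfrac (op r • y) q = nval hfrac y (φ r * q) := by
  obtain ⟨r₁, s₁, hs₁, h₁⟩ := hfrac q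
  have h₂ : (φ r * q) * φ s₁ = φ (r * r₁) := by rw [mul_assoc, h₁, map_mul]
  rw [nval_char hinj hOre hfrac _ hs₁ h₁, nval_char hinj hOre hfrac _ hs₁ h₂,
    smul_smul, ← op_mul]

theorem nval_phi (y : M) (a : R) :
    nval hfrac y (φ a) = (op a • y) /ₒ (1 : S.op) := by
  have h : φ a * φ (1 : R) = φ a := by rw [map_one, mul_one]
  rw [nval_char hinj hOre hfrac _ S.one_mem h]
  congr 1


end NVal

section BMap
variable [Module Rᵐᵒᵖ Q] (hsmul : ∀ (q : Q) (r : R), op r • q = q * φ r)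
variable (hinj : Function.Injective φ)
    (hOre : ∀ (r : R), ∀ s ∈ S, ∃ (r' s' : R), s' ∈ S ∧ r * s' = s * r')
    (hfrac : ∀ q : Q, ∃ (r : R) (s : R), s ∈ S ∧ q * φ s = φ r)

/-- The embedding of `M` into its localization. -/
noncomputable def iota : M →+ OreLocalization S.op M :=
  AddMonoidHom.mk' (fun m => m /ₒ (1 : S.op)) (fun _ _ => add_oreDiv.symm)

theorem bwd (hinj : Function.Injective φ)
    (hOre : ∀ (r : R), ∀ s ∈ S, ∃ (r' s' : R), s' ∈ S ∧ r * s' = s * r')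
    (x : M) (q q' : Q) (h : q - q' ∈ rsub R Q φ hsmul) :
    (QuotientAddGroup.mk (nval hfrac x q)
      : OreLocalization S.op M ⧸ (iota (M := M)).range)
      = QuotientAddGroup.mk (nval hfrac x q') := by
  obtain ⟨a, ha⟩ := h
  have hq : q = q' + φ a := by rw [ha]; abel
  rw [hq, nval_add_right hinj hOre hfrac, nval_phi hinj hOre hfrac]
  rw [QuotientAddGroup.mk_add]
  have : (QuotientAddGroup.mk (op a • x /ₒ (1 : S.op))
      : OreLocalization S.op M ⧸ (iota (M := M)).range) = 0 := by
    rw [QuotientAddGroup.eq_zero_iff]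
    exact ⟨op a • x, rfl⟩
  rw [this, add_zero]

/-- The map `M → K → M_S / M`. -/
noncomputable def bmap (x : M) (k : kmod R Q φ hsmul) :
    OreLocalization S.op M ⧸ (iota (M := M)).range :=
  Quotient.liftOn' k (fun q => QuotientAddGroup.mk (nval hfrac x q)) (fun q q' hqq =>
    bwd hsmul hfrac hinj hOre x q q' ((Submodule.quotientRel_def _).mp hqq))

theorem bmap_mk (x : M) (q : Q) :
    bmap hsmul hinj hOre hfrac x (Submodule.Quotient.mk q)
      = QuotientAddGroup.mk (nval hfrac x q) := rfl

include hinj hOre in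
theorem bmap_add1 (x y : M) (k : kmod R Q φ hsmul) :
    bmap hsmul hinj hOre hfrac (x + y) k
      = bmap hsmul hinj hOre hfrac x k + bmap hsmul hinj hOre hfrac y k := by
  induction k using Quotient.inductionOn' with
  | h q =>
    show (QuotientAddGroup.mk (nval hfrac (x + y) q)
        : OreLocalization S.op M ⧸ (iota (M := M)).range) = _
    rw [nval_add_left, QuotientAddGroup.mk_add]
    rfl

include hinj hOre in
theorem bmap_add2 (x : M) (k k' : kmod R Q φ hsmul) :
    bmap hsmul hinj hOre hfrac x (k + k')
      = bmap hsmul hinj hOre hfrac x k + bmap hsmul hinj hOre hfrac x k' := by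
  induction k using Quotient.inductionOn' with
  | h q =>
    induction k' using Quotient.inductionOn' with
    | h q' =>
      show (QuotientAddGroup.mk (nval hfrac x (q + q'))
          : OreLocalization S.op M ⧸ (iota (M := M)).range) = _
      rw [nval_add_right hinj hOre, QuotientAddGroup.mk_add]
      rfl

include hinj hOre in
theorem bmap_bal (x : M) (r : R) (k : kmod R Q φ hsmul) :
    bmap hsmul hinj hOre hfrac (op r • x) k
      = bmap hsmul hinj hOre hfrac x (lmulK R Q φ hsmul r k) := by
  induction k using Quotient.inductionOn' with
  | h q =>
    have hl : lmulK R Q φ hsmul r (Submodule.Quotient.mk q)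
        = Submodule.Quotient.mk (φ r * q) := by
      simp [lmulK, Submodule.mapQ_apply, lmulQ]
    have h1 : (Quotient.mk'' q : kmod R Q φ hsmul) = Submodule.Quotient.mk q := rfl
    rw [h1, hl, bmap_mk, bmap_mk, nval_bal hinj hOre]

end BMap

end Stmt3Aux

theorem stmt3 (R Q : Type u) [Ring R] [Ring Q] (S : Submonoid R) (φ : R →+* Q)
    [Module Rᵐᵒᵖ Q] (hsmul : ∀ (q : Q) (r : R), op r • q = q * φ r)
    (hsat : ∀ a b : R, a * b ∈ S → a ∈ S)
    (hOre : ∀ (r : R), ∀ s ∈ S, ∃ (r' s' : R), s' ∈ S ∧ r * s' = s * r')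
    (hreg : ∀ s ∈ S, IsRegular s)
    (hdf : ∀ a b : Q, a * b = 1 → b * a = 1)
    (hinj : Function.Injective φ)
    (hunit : ∀ s ∈ S, IsUnit (φ s))
    (hfrac : ∀ q : Q, ∃ (r : R) (s : R), s ∈ S ∧ q * φ s = φ r)
    (M T : Type u) [AddCommGroup M] [Module Rᵐᵒᵖ M] [AddCommGroup T] [Module Rᵐᵒᵖ T]
    -- `M` is torsion-free
    (htf : ∀ s ∈ S, ∀ x : M, op s • x = 0 → x = 0)
    -- `T` is the tensor product `M ⊗_R K`
    (β : M → kmod R Q φ hsmul → T)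
    (hβ1 : ∀ x y k, β (x + y) k = β x k + β y k)
    (hβ2 : ∀ x k k', β x (k + k') = β x k + β x k')
    (hbal : ∀ (x : M) (r : R) (k : kmod R Q φ hsmul),
      β (op r • x) k = β x (lmulK R Q φ hsmul r k))
    (hlin : ∀ (x : M) (r : R) (k : kmod R Q φ hsmul), β x (op r • k) = op r • β x k)
    (huniv : ∀ (A : Type u) [AddCommGroup A] (b : M → kmod R Q φ hsmul → A),
      (∀ x y k, b (x + y) k = b x k + b y k) →
      (∀ x k k', b x (k + k') = b x k + b x k') →
      (∀ (x : M) (r : R) (k : kmod R Q φ hsmul),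
        b (op r • x) k = b x (lmulK R Q φ hsmul r k)) →
      ∃! h : T →+ A, ∀ x k, h (β x k) = b x k) :
    -- (a) `ker λ` is the closure of `0` in the `R`-topology of `M`
    {x : M | lam R Q φ hsmul M T β hβ2 hlin x = 0}
      = {x : M | ∀ s ∈ S, ∀ r : R, ∃ m : M, op r • x = op s • m} ∧
    -- (b) `ker λ = ker η`
    {x : M | lam R Q φ hsmul M T β hβ2 hlin x = 0}
      = {x : M | etaFun R M S x = 0} ∧
    -- (c) `ker λ = h(M)`
    {x : M | lam R Q φ hsmul M T β hβ2 hlin x = 0} = ↑(hdivSub R Q M) := by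
  classical
  letI : OreLocalization.OreSet S.op := Stmt3Aux.mkOreSet hOre hreg
  -- basic facts
  have hβ0 : ∀ m : M, β m 0 = 0 := by
    intro m
    have h := hβ2 m 0 0
    rw [add_zero] at h
    exact left_eq_add.mp h
  have hui : ∀ s ∈ S, ∃ u : Q, φ s * u = 1 ∧ u * φ s = 1 := by
    intro s hs
    exact ⟨↑(hunit s hs).unit⁻¹, (hunit s hs).mul_val_inv, (hunit s hs).val_inv_mul⟩
  have hmk : ∀ q : Q, (Quotient.mk'' q : kmod R Q φ hsmul) = Submodule.Quotient.mk q :=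
    fun _ => rfl
  have hlmulK : ∀ (r : R) (q : Q), lmulK R Q φ hsmul r (Submodule.Quotient.mk q)
      = Submodule.Quotient.mk (φ r * q) := by
    intro r q
    simp [lmulK, Submodule.mapQ_apply, lmulQ]
  have hmk1 : (Submodule.Quotient.mk (1 : Q) : kmod R Q φ hsmul) = 0 :=
    (Submodule.Quotient.mk_eq_zero _).mpr ⟨1, map_one φ⟩
  have hlam : ∀ x : M, lam R Q φ hsmul M T β hβ2 hlin x = 0 ↔ ∀ k, β x k = 0 := by
    intro x
    constructor
    · intro h k
      exact DFunLike.congr_fun h k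
    · intro h
      apply LinearMap.ext
      intro k
      exact h k
  -- divisible implies in the kernel
  have hDker : ∀ x : M, (∀ s ∈ S, ∀ r : R, ∃ m : M, op r • x = op s • m) →
      ∀ k, β x k = 0 := by
    intro x hx k
    induction k using Quotient.inductionOn' with
    | h q =>
      rw [hmk q]
      obtain ⟨r, s, hs, hq⟩ := hfrac q
      obtain ⟨u, hu1, hu2⟩ := hui s hs
      have hq' : q = φ r * u := by
        have h3 : q * (φ s * u) = φ r * u := by rw [← mul_assoc, hq]
        rwa [hu1, mul_one] at h3
      obtain ⟨m, hm⟩ := hx s hs r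
      calc β x (Submodule.Quotient.mk q)
          = β x (lmulK R Q φ hsmul r (Submodule.Quotient.mk u)) := by
            rw [hlmulK, ← hq']
        _ = β (op r • x) (Submodule.Quotient.mk u) := (hbal _ _ _).symm
        _ = β (op s • m) (Submodule.Quotient.mk u) := by rw [hm]
        _ = β m (lmulK R Q φ hsmul s (Submodule.Quotient.mk u)) := hbal _ _ _
        _ = β m (Submodule.Quotient.mk (φ s * u)) := by rw [hlmulK]
        _ = β m 0 := by rw [hu1, hmk1]
        _ = 0 := hβ0 m
  -- in the kernel implies divisible
  have hkerD : ∀ x : M, (∀ k, β x k = 0) →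
      ∀ s ∈ S, ∀ r : R, ∃ m : M, op r • x = op s • m := by
    obtain ⟨h, hh, -⟩ := huniv (OreLocalization S.op M ⧸ (Stmt3Aux.iota (M := M)).range)
      (Stmt3Aux.bmap hsmul hinj hOre hfrac)
      (Stmt3Aux.bmap_add1 hsmul hinj hOre hfrac)
      (Stmt3Aux.bmap_add2 hsmul hinj hOre hfrac)
      (Stmt3Aux.bmap_bal hsmul hinj hOre hfrac)
    intro x hx s hs r
    obtain ⟨u, hu1, hu2⟩ := hui s hs
    have hq : (φ r * u) * φ s = φ r := by rw [mul_assoc, hu2, mul_one]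
    have hb0 : Stmt3Aux.bmap hsmul hinj hOre hfrac x (Submodule.Quotient.mk (φ r * u))
        = 0 := by
      rw [← hh x _, hx _, map_zero]
    rw [Stmt3Aux.bmap_mk, Stmt3Aux.nval_char hinj hOre hfrac x hs hq] at hb0
    obtain ⟨m, hm⟩ := (QuotientAddGroup.eq_zero_iff _).mp hb0
    have hm' : (m /ₒ (1 : S.op) : OreLocalization S.op M)
        = (op r • x) /ₒ ⟨op s, Stmt3Aux.opmem hs⟩ := hm
    obtain ⟨u₀, v, h1, h2⟩ := OreLocalization.oreDiv_eq_iff.mp hm'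
    set c := (u₀ : Rᵐᵒᵖ).unop with hc
    have hcS : c ∈ S := u₀.2
    have hv : v = op c * op s := by
      have h2' : (u₀ : Rᵐᵒᵖ) * op s = v * 1 := h2
      rw [mul_one] at h2'
      rw [← h2', hc, op_unop]
    have h1' : (op c : Rᵐᵒᵖ) • (op r • x) = op c • (op s • m) := by
      have h1'' : (u₀ : Rᵐᵒᵖ) • (op r • x) = v • m := h1
      rw [hv, mul_smul] at h1''
      rw [hc, op_unop]
      exact h1''
    refine ⟨m, ?_⟩
    have hz := htf c hcS (op r • x - op s • m) (by rw [smul_sub, h1', sub_self])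
    exact sub_eq_zero.mp hz
  -- the three statements
  have hDiff : ∀ x : M, lam R Q φ hsmul M T β hβ2 hlin x = 0 ↔
      (∀ s ∈ S, ∀ r : R, ∃ m : M, op r • x = op s • m) :=
    fun x => ⟨fun hx => hkerD x ((hlam x).mp hx), fun hx => (hlam x).mpr (hDker x hx)⟩
  refine ⟨?_, ?_, ?_⟩
  · ext x
    simp only [Set.mem_setOf_eq]
    exact hDiff x
  · ext x
    simp only [Set.mem_setOf_eq]
    rw [hDiff x]
    constructor
    · intro hx
      apply Subtype.ext
      funext F
      show (Submodule.Quotient.mk x : M ⧸ ufin R M S F) = 0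
      rw [Submodule.Quotient.mk_eq_zero]
      simp only [ufin, Submodule.mem_iInf]
      intro t ht
      exact fun r => hx t.1 t.2 r
    · intro hx s hs r
      have h1 := congrFun (congrArg Subtype.val hx) ({⟨s, hs⟩} : Finset S)
      have h2 : (Submodule.Quotient.mk x : M ⧸ ufin R M S ({⟨s, hs⟩} : Finset S)) = 0 := h1
      rw [Submodule.Quotient.mk_eq_zero] at h2
      simp only [ufin, Submodule.mem_iInf] at h2
      exact h2 ⟨s, hs⟩ (Finset.mem_singleton_self _) r
  · -- part (c)
    let Dsub : Submodule Rᵐᵒᵖ M :=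
      { carrier := {x : M | ∀ s ∈ S, ∀ r : R, ∃ m : M, op r • x = op s • m}
        zero_mem' := fun s hs r => ⟨0, by simp⟩
        add_mem' := by
          rintro a b ha hb s hs r
          obtain ⟨m, hm⟩ := ha s hs r
          obtain ⟨m', hm'⟩ := hb s hs r
          exact ⟨m + m', by rw [smul_add, smul_add, hm, hm']⟩
        smul_mem' := by
          rintro c a ha s hs r
          obtain ⟨m, hm⟩ := ha s hs (c.unop * r)
          refine ⟨m, ?_⟩
          rw [smul_smul]
          have : op r * c = op (c.unop * r) := by rw [op_mul, op_unop]
          rw [this, hm] }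
    -- Dsub is h-divisible
    have hDmem : Dsub ∈ {N : Submodule Rᵐᵒᵖ M |
        ∀ y ∈ N, ∃ g : Q →ₗ[Rᵐᵒᵖ] M, LinearMap.range g ≤ N ∧ g 1 = y} := by
      intro y hy
      have gex : ∀ q : Q, ∃ m : M, ∀ (r s : R), s ∈ S → q * φ s = φ r →
          op s • m = op r • y := by
        intro q
        obtain ⟨r₀, s₀, hs₀, h₀⟩ := hfrac q
        obtain ⟨m, hm⟩ := hy s₀ hs₀ r₀
        refine ⟨m, fun r s hs h => ?_⟩
        obtain ⟨r₁, s₁, hs₁, hss⟩ := hOre s s₀ hs₀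
        have hnum : r * s₁ = r₀ * r₁ := by
          apply hinj
          calc φ (r * s₁) = q * φ (s * s₁) := by rw [map_mul, map_mul, ← mul_assoc, h]
            _ = q * φ (s₀ * r₁) := by rw [hss]
            _ = φ (r₀ * r₁) := by rw [map_mul, map_mul, ← mul_assoc, h₀]
        have hz := htf s₁ hs₁ (op s • m - op r • y) ?_
        · exact sub_eq_zero.mp hz
        rw [smul_sub, smul_smul, smul_smul, ← op_mul, ← op_mul, hss, hnum]
        rw [op_mul, op_mul, mul_smul, mul_smul, ← hm, sub_self]
      set g0 : Q → M := fun q => (gex q).choose with hg0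
      have gsp : ∀ (q : Q) (r s : R), s ∈ S → q * φ s = φ r →
          op s • g0 q = op r • y := fun q => (gex q).choose_spec
      have g0_one : g0 1 = y := by
        have := gsp 1 1 1 S.one_mem (by rw [one_mul, map_one])
        simpa using this
      have g0_add : ∀ q q' : Q, g0 (q + q') = g0 q + g0 q' := by
        intro q q'
        obtain ⟨r, s, hs, h⟩ := hfrac q
        obtain ⟨r', s', hs', h'⟩ := hfrac q'
        obtain ⟨r₁, s₁, hs₁, hss⟩ := hOre s' s hs
        have hmem : s * r₁ ∈ S := hss ▸ S.mul_mem hs' hs₁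
        have hq : q * φ (s * r₁) = φ (r * r₁) := by
          rw [map_mul, map_mul, ← mul_assoc, h]
        have hq' : q' * φ (s * r₁) = φ (r' * s₁) := by
          rw [← hss, map_mul, map_mul, ← mul_assoc, h']
        have hsum : (q + q') * φ (s * r₁) = φ (r * r₁ + r' * s₁) := by
          rw [add_mul, hq, hq', map_add]
        have e1 := gsp (q + q') _ _ hmem hsum
        have e2 := gsp q _ _ hmem hq
        have e3 := gsp q' _ _ hmem hq'
        have hz := htf (s * r₁) hmem (g0 (q + q') - (g0 q + g0 q')) ?_
        · exact sub_eq_zero.mp hz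
        rw [smul_sub, smul_add, e1, e2, e3, op_add, add_smul, sub_self]
      have g0_smul : ∀ (c : Rᵐᵒᵖ) (q : Q), g0 (c • q) = c • g0 q := by
        intro c q
        obtain ⟨r, s, hs, h⟩ := hfrac q
        obtain ⟨r₁, s₁, hs₁, hss⟩ := hOre c.unop s hs
        have hcq : c • q = q * φ c.unop := by rw [← hsmul, op_unop]
        have hq : (c • q) * φ s₁ = φ (r * r₁) := by
          rw [hcq, mul_assoc, ← map_mul, hss, map_mul, ← mul_assoc, h, ← map_mul]
        have e1 := gsp (c • q) _ _ hs₁ hq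
        have e2 := gsp q _ _ hs h
        have hz := htf s₁ hs₁ (g0 (c • q) - c • g0 q) ?_
        · exact sub_eq_zero.mp hz
        have key : op s₁ • (c • g0 q) = op (r * r₁) • y := by
          rw [smul_smul, ← op_unop c, ← op_mul, hss, op_mul, mul_smul, e2, smul_smul,
            ← op_mul]
        rw [smul_sub, e1, key, sub_self]
      let g : Q →ₗ[Rᵐᵒᵖ] M :=
        { toFun := g0
          map_add' := g0_add
          map_smul' := fun c q => g0_smul c q }
      refine ⟨g, ?_, g0_one⟩
      rintro _ ⟨q, rfl⟩ s hs r
      obtain ⟨u, hu1, hu2⟩ := hui s hs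
      refine ⟨g (q * φ r * u), ?_⟩
      have e1 : op r • g q = g (q * φ r) := by
        rw [← hsmul]
        exact (map_smul g (op r) q).symm
      have e2 : op s • g (q * φ r * u) = g (q * φ r) := by
        rw [← map_smul, hsmul, mul_assoc, hu2, mul_one]
      rw [e1, e2]
    ext x
    simp only [Set.mem_setOf_eq, SetLike.mem_coe]
    rw [hDiff x]
    constructor
    · intro hx
      exact le_sSup hDmem hx
    · intro hx s hs r
      have hle : hdivSub R Q M ≤ Dsub := by
        apply sSup_le
        intro N hN z hz
        obtain ⟨g, hgr, hg1⟩ := hN z hz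
        intro t ht r'
        obtain ⟨u, hu1, hu2⟩ := hui t ht
        refine ⟨g (φ r' * u), ?_⟩
        have e1 : op r' • z = g (φ r') := by
          rw [← hg1, ← map_smul, hsmul, one_mul]
        have e2 : op t • g (φ r' * u) = g (φ r') := by
          rw [← map_smul, hsmul, mul_assoc, hu2, mul_one]
        rw [e1, e2]
      exact hle hx s hs r
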